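/- Let K be a nonempty compact topological space and let γ : [0,1] → C(K, ℝ) be continuous with respect to the supremum norm on C(K, ℝ). Assume that sup_{x∈K} |γ(t)(x)| = 1 for every t ∈ [0,1], that γ(0) ≥ 0 on K, and that γ(1) ≤ 0 on K. Then there exists t₀ ∈ [0,1] such that sup_{x∈K} (γ(t₀)(x))⁺ = sup_{x∈K} (γ(t₀)(x))⁻ = 1, where w⁺ = max(w,0) and w⁻ = max(−w,0). -/

import Mathlib

open Set

private lemma abs_max_zero (a : ℝ) : |max a 0| = max a 0 :=
  abs_of_nonneg (le_max_right a 0)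

private lemma abs_eq_max_parts (a : ℝ) : |a| = max (max a 0) (max (-a) 0) := by
  rcases le_total a 0 with h | h
  · simp [abs_of_nonpos h, max_eq_right h, max_eq_left (neg_nonneg.mpr h),
      max_eq_right (neg_nonneg.mpr h)]
  · simp [abs_of_nonneg h, max_eq_left h, max_eq_right (neg_nonpos.mpr h),
      max_eq_left (le_trans (neg_nonpos.mpr h) h)]

private lemma sSup_pos_eq_norm {K : Type*} [TopologicalSpace K] [CompactSpace K] [Nonempty K]
    (f : C(K, ℝ)) : sSup (Set.range fun x => max (f x) 0) = ‖f ⊔ 0‖ := by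
  rw [ContinuousMap.norm_eq_iSup_norm]
  unfold iSup
  congr 1
  ext y
  constructor <;> rintro ⟨x, rfl⟩ <;> exact ⟨x, by
    simp [Real.norm_eq_abs, abs_max_zero]⟩

private lemma sSup_abs_eq_norm {K : Type*} [TopologicalSpace K] [CompactSpace K] [Nonempty K]
    (f : C(K, ℝ)) : sSup (Set.range fun x => |f x|) = ‖f‖ := by
  rw [ContinuousMap.norm_eq_iSup_norm]
  unfold iSup
  congr 1

private lemma posnorm_lipschitz {K : Type*} [TopologicalSpace K] [CompactSpace K] [Nonempty K] :
    LipschitzWith 1 (fun f : C(K, ℝ) => ‖f ⊔ 0‖) := by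
  apply LipschitzWith.of_dist_le_mul
  intro f g
  rw [Real.dist_eq, NNReal.coe_one, one_mul, dist_eq_norm]
  refine (abs_norm_sub_norm_le _ _).trans ?_
  rw [ContinuousMap.norm_le _ (norm_nonneg _)]
  intro x
  simp only [ContinuousMap.sub_apply, ContinuousMap.sup_apply, ContinuousMap.zero_apply,
    Real.norm_eq_abs]
  refine (abs_max_sub_max_le_abs _ _ _).trans ?_
  simpa [Real.norm_eq_abs] using (f - g).norm_coe_le_norm x

private lemma max_pos_neg_norm {K : Type*} [TopologicalSpace K] [CompactSpace K] [Nonempty K]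
    (f : C(K, ℝ)) : max ‖f ⊔ 0‖ ‖(-f) ⊔ 0‖ = ‖f‖ := by
  have habs : ∀ x : K, |f x| ≤ ‖f‖ := fun x => by
    simpa [Real.norm_eq_abs] using f.norm_coe_le_norm x
  apply le_antisymm
  · refine max_le ?_ ?_
    · rw [ContinuousMap.norm_le _ (norm_nonneg _)]
      intro x
      simp only [ContinuousMap.sup_apply, ContinuousMap.zero_apply,
        Real.norm_eq_abs, abs_max_zero]
      exact max_le ((le_abs_self _).trans (habs x)) (norm_nonneg f)
    · rw [ContinuousMap.norm_le _ (norm_nonneg _)]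
      intro x
      simp only [ContinuousMap.sup_apply, ContinuousMap.zero_apply, ContinuousMap.neg_apply,
        Real.norm_eq_abs, abs_max_zero]
      exact max_le ((neg_le_abs _).trans (habs x)) (norm_nonneg f)
  · rw [ContinuousMap.norm_le _ (le_max_of_le_left (norm_nonneg _))]
    intro x
    have h1 : max (f x) 0 ≤ ‖f ⊔ 0‖ := by
      have := (f ⊔ 0).norm_coe_le_norm x
      simpa [Real.norm_eq_abs, abs_max_zero] using this
    have h2 : max (-f x) 0 ≤ ‖(-f) ⊔ 0‖ := by
      have := ((-f) ⊔ 0).norm_coe_le_norm x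
      simpa [Real.norm_eq_abs, abs_max_zero] using this
    rw [Real.norm_eq_abs, abs_eq_max_parts]
    exact max_le_max h1 h2

theorem exists_balanced_function_on_path
    {K : Type*} [TopologicalSpace K] [CompactSpace K] [Nonempty K]
    (γ : ℝ → C(K, ℝ)) (hγ : ContinuousOn γ (Icc (0:ℝ) 1))
    (hnorm : ∀ t ∈ Icc (0:ℝ) 1, sSup (Set.range fun x => |γ t x|) = 1)
    (h0 : ∀ x : K, 0 ≤ γ 0 x) (h1 : ∀ x : K, γ 1 x ≤ 0) :
    ∃ t₀ ∈ Icc (0:ℝ) 1,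
      sSup (Set.range fun x => max (γ t₀ x) 0) = 1 ∧
      sSup (Set.range fun x => max (-γ t₀ x) 0) = 1 := by
  have hnorm' : ∀ t ∈ Icc (0:ℝ) 1, ‖γ t‖ = 1 := fun t ht => by
    rw [← sSup_abs_eq_norm]; exact hnorm t ht
  set P : C(K, ℝ) → ℝ := fun f => ‖f ⊔ 0‖ with hP
  set N : C(K, ℝ) → ℝ := fun f => ‖(-f) ⊔ 0‖ with hN
  have hPc : Continuous P := posnorm_lipschitz.continuous
  have hNc : Continuous N := posnorm_lipschitz.continuous.comp continuous_neg
  set g : ℝ → ℝ := fun t => P (γ t) - N (γ t) with hg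
  have hgc : ContinuousOn g (Icc 0 1) :=
    (hPc.comp_continuousOn hγ).sub (hNc.comp_continuousOn hγ)
  have hg0 : g 0 = 1 := by
    have hpos : γ 0 ⊔ 0 = γ 0 := by
      ext x; simp [max_eq_left (h0 x)]
    have hneg : (-(γ 0)) ⊔ 0 = 0 := by
      ext x; simp [max_eq_right (neg_nonpos.mpr (h0 x))]
    simp [hg, hP, hN, hpos, hneg, hnorm' 0 (by norm_num)]
  have hg1 : g 1 = -1 := by
    have hpos : γ 1 ⊔ 0 = 0 := by
      ext x; simp [max_eq_right (h1 x)]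
    have hneg : (-(γ 1)) ⊔ 0 = -(γ 1) := by
      ext x; simp [max_eq_left (neg_nonneg.mpr (h1 x))]
    simp [hg, hP, hN, hpos, hneg, hnorm' 1 (by norm_num)]
  have hmem : (0:ℝ) ∈ g '' Icc 0 1 := by
    apply intermediate_value_Icc' (by norm_num : (0:ℝ) ≤ 1) hgc
    rw [hg0, hg1]; constructor <;> norm_num
  obtain ⟨t₀, ht₀, hgt₀⟩ := hmem
  refine ⟨t₀, ht₀, ?_, ?_⟩
  · have heq : P (γ t₀) = N (γ t₀) := by
      have := sub_eq_zero.mp hgt₀; linarith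
    have hmax : max (P (γ t₀)) (N (γ t₀)) = 1 := by
      rw [hP, hN]; exact (max_pos_neg_norm (γ t₀)).trans (hnorm' t₀ ht₀)
    rw [heq, max_self] at hmax
    rw [sSup_pos_eq_norm]
    show P (γ t₀) = 1
    rw [heq]; exact hmax
  · have heq : P (γ t₀) = N (γ t₀) := by
      have := sub_eq_zero.mp hgt₀; linarith
    have hmax : max (P (γ t₀)) (N (γ t₀)) = 1 := by
      rw [hP, hN]; exact (max_pos_neg_norm (γ t₀)).trans (hnorm' t₀ ht₀)
    rw [heq, max_self] at hmax
    have : (fun x => max (-γ t₀ x) 0) = fun x => max ((-(γ t₀)) x) 0 := by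
      ext x; simp
    rw [this, sSup_pos_eq_norm]
    exact hmax
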